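/- For every integer r ≥ 3 and integers n₁ ≥ n₂ ≥ ⋯ ≥ n_r ≥ 1, the complete r-partite graph K_{n₁,n₂,…,n_r} contains a family of min{ ⌊(n₁+⋯+n_r)/3⌋, ⌊(n₂+⋯+n_r)/2⌋, n₃+⋯+n_r } pairwise vertex-disjoint triangles. -/

import Mathlib

open Finset

/-- The complete `r`-partite graph with parts of sizes `n 0, n 1, …, n (r-1)`. -/
def Kpartite (r : ℕ) (n : ℕ → ℕ) : SimpleGraph ((i : Fin r) × Fin (n i)) :=
  SimpleGraph.completeMultipartiteGraph fun i : Fin r => Fin (n i)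

/-- The edge-coloring `c` contains a rainbow 3-cycle in `G`. -/
def RainbowC3 {V α : Type*} (G : SimpleGraph V) (c : Sym2 V → α) : Prop :=
  ∃ a b d : V, G.Adj a b ∧ G.Adj b d ∧ G.Adj d a ∧
    c s(a, b) ≠ c s(b, d) ∧ c s(b, d) ≠ c s(d, a) ∧ c s(a, b) ≠ c s(d, a)

/-- The edge-coloring `c` contains a rainbow 4-cycle in `G`. -/
def RainbowC4 {V α : Type*} (G : SimpleGraph V) (c : Sym2 V → α) : Prop :=
  ∃ a b d e : V, G.Adj a b ∧ G.Adj b d ∧ G.Adj d e ∧ G.Adj e a ∧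
    a ≠ d ∧ b ≠ e ∧
    c s(a, b) ≠ c s(b, d) ∧ c s(a, b) ≠ c s(d, e) ∧ c s(a, b) ≠ c s(e, a) ∧
    c s(b, d) ≠ c s(d, e) ∧ c s(b, d) ≠ c s(e, a) ∧ c s(d, e) ≠ c s(e, a)

/-- The coloring `c` uses every one of the `k` colors on at least one edge of `G`
(i.e. it uses exactly `k` colors). -/
def SurjOnEdges {V : Type*} {k : ℕ} (G : SimpleGraph V) (c : Sym2 V → Fin k) : Prop :=
  ∀ i : Fin k, ∃ e ∈ G.edgeSet, c e = i

/-- `G` contains `t` pairwise vertex-disjoint triangles. -/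
def HasDisjointTriangles {V : Type*} (G : SimpleGraph V) (t : ℕ) : Prop :=
  ∃ f : Fin t → Finset V, (∀ i, G.IsNClique 3 (f i)) ∧
    ∀ i j : Fin t, i ≠ j → Disjoint (f i) (f j)

def Tsum (r : ℕ) (m : Fin r → ℕ) : ℕ := ∑ i, m i
def Mtop (r : ℕ) (m : Fin r → ℕ) : ℕ := Finset.univ.sup m
def Ptop (r : ℕ) (m : Fin r → ℕ) : ℕ :=
  Finset.univ.sup (fun p : Fin r × Fin r => if p.1 = p.2 then 0 else m p.1 + m p.2)
def minexpr (r : ℕ) (m : Fin r → ℕ) : ℕ :=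
  min (min (Tsum r m / 3) ((Tsum r m - Mtop r m) / 2)) (Tsum r m - Ptop r m)


lemma arith_A (f T T' : ℕ) (hf : 1 ≤ f) (hfa : f ≤ T / 3) (h5 : T' + 3 = T) :
    f ≤ T' / 3 + 1 := by omega

lemma arith_B1 (f T T' M' ma c1 : ℕ) (hfb : f ≤ (T - c1) / 2) (h5 : T' + 3 = T)
    (h6 : M' = ma - 1) (h7 : 1 ≤ ma) (h8 : ma ≤ c1) : f ≤ (T' - M') / 2 + 1 := by omega

lemma arith_B2 (f T T' M' c1 c2 c3 : ℕ) (hf : 1 ≤ f) (hfa : f ≤ T / 3)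
    (hfb : f ≤ (T - c1) / 2) (h5 : T' + 3 = T) (h6 : M' ≤ c3) (h9 : c3 ≤ c2)
    (h10 : c2 ≤ c1) (h12 : c1 + c2 + c3 + M' ≤ T) : f ≤ (T' - M') / 2 + 1 := by omega

lemma arith_C0 (f T T' P' : ℕ) (hf : 1 ≤ f) (hfa : f ≤ T / 3) (h5 : T' + 3 = T)
    (hP : P' = 0) : f ≤ T' - P' + 1 := by omega

lemma arith_C1 (f T T' P' ma mb c1 c2 : ℕ) (hfc : f ≤ T - (c1 + c2)) (h5 : T' + 3 = T)
    (hP : P' = ma - 1 + (mb - 1)) (h1 : 1 ≤ ma) (h2 : 1 ≤ mb) (h3 : ma + mb ≤ c1 + c2) :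
    f ≤ T' - P' + 1 := by omega

lemma arith_C2 (f T T' P' ma mb c1 c2 c3 : ℕ) (hf : 1 ≤ f) (hfa : f ≤ T / 3)
    (hfb : f ≤ (T - c1) / 2) (hfc : f ≤ T - (c1 + c2)) (h5 : T' + 3 = T)
    (hP : P' = ma - 1 + mb) (h1 : 1 ≤ ma) (h2 : ma ≤ c1) (h3 : mb ≤ c3) (h9 : c3 ≤ c2)
    (h10 : c2 ≤ c1) (h4 : ma + mb ≤ c1 + c2) (h12 : c1 + c2 + c3 + mb ≤ T) :
    f ≤ T' - P' + 1 := by omega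

lemma arith_C3 (f T T' P' ma mb c1 c2 c3 : ℕ) (hf : 1 ≤ f) (hfa : f ≤ T / 3)
    (hfb : f ≤ (T - c1) / 2) (hfc : f ≤ T - (c1 + c2)) (h5 : T' + 3 = T)
    (hP : P' = ma + mb) (h3 : ma ≤ c3) (h3' : mb ≤ c3) (h9 : c3 ≤ c2) (h10 : c2 ≤ c1)
    (h11 : 1 ≤ c3) (h12 : c1 + c2 + c3 + ma + mb ≤ T) : f ≤ T' - P' + 1 := by omega

lemma arith_final (f A B C : ℕ) (hA : f ≤ A + 1) (hB : f ≤ B + 1) (hC : f ≤ C + 1) :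
    f ≤ min (min A B) C + 1 := by omega

set_option maxHeartbeats 1600000 in
theorem step_lemma {r : ℕ} (hr : 3 ≤ r) (m : Fin r → ℕ) (hf : 1 ≤ minexpr r m) :
    ∃ i₁ i₂ i₃ : Fin r, i₁ ≠ i₂ ∧ i₁ ≠ i₃ ∧ i₂ ≠ i₃ ∧ 1 ≤ m i₁ ∧ 1 ≤ m i₂ ∧ 1 ≤ m i₃ ∧
      minexpr r m ≤
        minexpr r (fun i => if i = i₁ ∨ i = i₂ ∨ i = i₃ then m i - 1 else m i) + 1 := by
  classical
  have h0 : (Finset.univ : Finset (Fin r)).Nonempty := by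
    rw [← Finset.card_pos]; simp; omega
  obtain ⟨i₁, -, hmax1'⟩ := Finset.exists_max_image Finset.univ m h0
  have hmax1 : ∀ b, m b ≤ m i₁ := fun b => hmax1' b (mem_univ b)
  have h1ne : (Finset.univ.erase i₁).Nonempty := by
    rw [← Finset.card_pos, Finset.card_erase_of_mem (Finset.mem_univ _)]
    simp; omega
  obtain ⟨i₂, hi₂mem, hmax2'⟩ := Finset.exists_max_image _ m h1ne
  have h21 : i₂ ≠ i₁ := (Finset.mem_erase.1 hi₂mem).1
  have hmax2 : ∀ b, b ≠ i₁ → m b ≤ m i₂ := fun b hb =>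
    hmax2' b (Finset.mem_erase.2 ⟨hb, mem_univ b⟩)
  have h2ne : ((Finset.univ.erase i₁).erase i₂).Nonempty := by
    rw [← Finset.card_pos, Finset.card_erase_of_mem (Finset.mem_erase.2 ⟨h21, mem_univ _⟩),
      Finset.card_erase_of_mem (Finset.mem_univ _)]
    simp; omega
  obtain ⟨i₃, hi₃mem, hmax3'⟩ := Finset.exists_max_image _ m h2ne
  have h32 : i₃ ≠ i₂ := (Finset.mem_erase.1 hi₃mem).1
  have h31 : i₃ ≠ i₁ := (Finset.mem_erase.1 (Finset.mem_erase.1 hi₃mem).2).1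
  have hmax3 : ∀ b, b ≠ i₁ → b ≠ i₂ → m b ≤ m i₃ := fun b hb1 hb2 =>
    hmax3' b (Finset.mem_erase.2 ⟨hb2, Finset.mem_erase.2 ⟨hb1, mem_univ b⟩⟩)
  have hc21 : m i₂ ≤ m i₁ := hmax1 i₂
  have hc32 : m i₃ ≤ m i₂ := hmax2 i₃ h31
  -- Mtop and Ptop identified
  have hM : Mtop r m = m i₁ := le_antisymm (Finset.sup_le fun b _ => hmax1 b)
    (Finset.le_sup (mem_univ i₁))
  have hpair : ∀ a b : Fin r, a ≠ b → m a + m b ≤ m i₁ + m i₂ := by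
    intro a b hab
    by_cases ha : a = i₁
    · subst ha; have := hmax2 b (Ne.symm hab); omega
    · have h1 := hmax2 a ha
      have h2 := hmax1 b
      omega
  have hP : Ptop r m = m i₁ + m i₂ := by
    apply le_antisymm
    · apply Finset.sup_le
      intro p _
      by_cases hp : p.1 = p.2
      · simp [hp]
      · simp only [if_neg hp]; exact hpair p.1 p.2 hp
    · have := Finset.le_sup (f := fun p : Fin r × Fin r => if p.1 = p.2 then 0 else m p.1 + m p.2)
        (mem_univ (i₁, i₂))
      simp [Ne.symm h21] at this; exact this
  -- bounds from hf
  have hf1 : 1 ≤ Tsum r m / 3 ∧ 1 ≤ (Tsum r m - Mtop r m) / 2 ∧ 1 ≤ Tsum r m - Ptop r m := by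
    unfold minexpr at hf; omega
  -- subset sums
  have hsub : ∀ s : Finset (Fin r), ∑ i ∈ s, m i ≤ Tsum r m :=
    fun s => Finset.sum_le_sum_of_subset (Finset.subset_univ s)
  have hT3 : m i₁ + m i₂ + m i₃ ≤ Tsum r m := by
    have := hsub {i₁, i₂, i₃}
    rw [Finset.sum_insert (by simp [h21.symm, h31.symm]),
      Finset.sum_insert (by simp [h32.symm]), Finset.sum_singleton] at this
    omega
  -- m i₃ ≥ 1
  have hc3pos : 1 ≤ m i₃ := by
    by_contra hc
    have hz : m i₃ = 0 := by omega
    have hle : ∀ i : Fin r, m i ≤ (if i = i₁ then m i₁ else 0) + (if i = i₂ then m i₂ else 0) := by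
      intro i
      by_cases e1 : i = i₁
      · subst e1; simp [h21.symm] -- i₁ ≠ i₂ case handled below
      · by_cases e2 : i = i₂
        · subst e2; simp [e1]
        · have := hmax3 i e1 e2; simp [e1, e2]; omega
    have : Tsum r m ≤ m i₁ + m i₂ := by
      calc Tsum r m ≤ ∑ i, ((if i = i₁ then m i₁ else 0) + (if i = i₂ then m i₂ else 0)) :=
            Finset.sum_le_sum fun i _ => hle i
        _ = m i₁ + m i₂ := by
            rw [Finset.sum_add_distrib, Finset.sum_ite_eq' Finset.univ i₁,
              Finset.sum_ite_eq' Finset.univ i₂]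
            simp
    rw [hP] at hf1; omega
  have hc2pos : 1 ≤ m i₂ := le_trans hc3pos hc32
  have hc1pos : 1 ≤ m i₁ := le_trans hc2pos hc21
  refine ⟨i₁, i₂, i₃, h21.symm, h31.symm, h32.symm, hc1pos, hc2pos, hc3pos, ?_⟩
  obtain ⟨m', hm'def⟩ : ∃ m' : Fin r → ℕ,
      m' = fun i => if i = i₁ ∨ i = i₂ ∨ i = i₃ then m i - 1 else m i := ⟨_, rfl⟩
  rw [← hm'def]
  have hm'val : ∀ i, (i = i₁ ∨ i = i₂ ∨ i = i₃ → m' i = m i - 1) ∧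
      (¬(i = i₁ ∨ i = i₂ ∨ i = i₃) → m' i = m i) := by
    intro i; constructor <;> intro h <;> simp [hm'def, h]
  -- new total
  have hpos_all : ∀ i : Fin r, (i = i₁ ∨ i = i₂ ∨ i = i₃) → 1 ≤ m i := by
    rintro i (rfl | rfl | rfl) <;> assumption
  have hT' : Tsum r m' + 3 = Tsum r m := by
    have key : ∀ i ∈ Finset.univ, m i = m' i +
        (if i ∈ ({i₁, i₂, i₃} : Finset (Fin r)) then 1 else 0) := by
      intro i _
      by_cases g : i ∈ ({i₁, i₂, i₃} : Finset (Fin r))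
      · have g' : i = i₁ ∨ i = i₂ ∨ i = i₃ := by simpa using g
        have := hpos_all i g'
        simp only [hm'def, if_pos g, if_pos g']
        omega
      · have g' : ¬(i = i₁ ∨ i = i₂ ∨ i = i₃) := by simpa using g
        simp only [hm'def, if_neg g, if_neg g']
        omega
    have hcard3 : ({i₁, i₂, i₃} : Finset (Fin r)).card = 3 := by
      rw [Finset.card_insert_of_notMem (by simp [h21.symm, h31.symm]),
        Finset.card_insert_of_notMem (by simp [h32.symm]), Finset.card_singleton]
    have hind : ∑ i : Fin r, (if i ∈ ({i₁, i₂, i₃} : Finset (Fin r)) then (1:ℕ) else 0) = 3 := by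
      rw [Finset.sum_ite_mem, Finset.univ_inter, Finset.sum_const, hcard3, smul_eq_mul]
    have : Tsum r m = Tsum r m' + ∑ i : Fin r,
        (if i ∈ ({i₁, i₂, i₃} : Finset (Fin r)) then (1:ℕ) else 0) := by
      unfold Tsum
      rw [Finset.sum_congr rfl key, Finset.sum_add_distrib]
    omega
  have hfa : minexpr r m ≤ Tsum r m / 3 := by unfold minexpr; omega
  have hfb : minexpr r m ≤ (Tsum r m - m i₁) / 2 := by
    have : minexpr r m ≤ (Tsum r m - Mtop r m) / 2 := by unfold minexpr; omega
    rwa [hM] at this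
  have hfc : minexpr r m ≤ Tsum r m - (m i₁ + m i₂) := by
    have : minexpr r m ≤ Tsum r m - Ptop r m := by unfold minexpr; omega
    rwa [hP] at this
  have hsub4 : ∀ a : Fin r, a ≠ i₁ → a ≠ i₂ → a ≠ i₃ →
      m i₁ + m i₂ + m i₃ + m a ≤ Tsum r m := by
    intro a ga1 ga2 ga3
    have := hsub {i₁, i₂, i₃, a}
    rw [Finset.sum_insert (by simp [h21.symm, h31.symm, Ne.symm ga1]),
      Finset.sum_insert (by simp [h32.symm, Ne.symm ga2]),
      Finset.sum_pair (Ne.symm ga3)] at this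
    omega
  have ineqA : minexpr r m ≤ Tsum r m' / 3 + 1 := arith_A _ _ _ hf hfa hT' 
  have ineqB : minexpr r m ≤ (Tsum r m' - Mtop r m') / 2 + 1 := by
    obtain ⟨a, -, ha'⟩ := Finset.exists_mem_eq_sup Finset.univ h0 m'
    have ha : Mtop r m' = m' a := ha'
    by_cases ga : a = i₁ ∨ a = i₂ ∨ a = i₃
    · have h1 : m' a = m a - 1 := (hm'val a).1 ga
      rw [h1] at ha
      have h2 : 1 ≤ m a := hpos_all a ga
      have h3 : m a ≤ m i₁ := hmax1 a
      exact arith_B1 _ _ _ _ _ _ hfb hT' ha h2 h3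
    · push_neg at ga
      obtain ⟨ga1, ga2, ga3⟩ := ga
      have h1 : m' a = m a := (hm'val a).2 (fun h => h.elim ga1 fun h' => h'.elim ga2 ga3)
      rw [h1] at ha
      have h2 : m a ≤ m i₃ := hmax3 a ga1 ga2
      have h4 : m i₁ + m i₂ + m i₃ + Mtop r m' ≤ Tsum r m := by
        rw [ha]; exact hsub4 a ga1 ga2 ga3
      exact arith_B2 _ _ _ _ _ _ _ hf hfa hfb hT' (ha ▸ h2) hc32 hc21 h4
  have ineqC : minexpr r m ≤ (Tsum r m' - Ptop r m') + 1 := by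
    obtain ⟨p, -, hp'⟩ := Finset.exists_mem_eq_sup (Finset.univ : Finset (Fin r × Fin r))
      (by rw [← Finset.card_pos]; simp [Fintype.card_prod]; omega)
      (fun p : Fin r × Fin r => if p.1 = p.2 then 0 else m' p.1 + m' p.2)
    have hp : Ptop r m' = if p.1 = p.2 then 0 else m' p.1 + m' p.2 := hp'
    by_cases hpp : p.1 = p.2
    · rw [if_pos hpp] at hp
      exact arith_C0 _ _ _ _ hf hfa hT' hp
    · obtain ⟨a, b⟩ := p
      dsimp only at hp hpp
      rw [if_neg hpp] at hp
      have hab : a ≠ b := hpp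
      have hpr := hpair a b hab
      by_cases ga : a = i₁ ∨ a = i₂ ∨ a = i₃ <;> by_cases gb : b = i₁ ∨ b = i₂ ∨ b = i₃
      · have h1 : m' a = m a - 1 := (hm'val a).1 ga
        have h2 : m' b = m b - 1 := (hm'val b).1 gb
        rw [h1, h2] at hp
        have h3 : 1 ≤ m a := hpos_all a ga
        have h4 : 1 ≤ m b := hpos_all b gb
        exact arith_C1 _ _ _ _ _ _ _ _ hfc hT' hp h3 h4 hpr
      · push_neg at gb
        obtain ⟨gb1, gb2, gb3⟩ := gb
        have h1 : m' a = m a - 1 := (hm'val a).1 ga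
        have h2 : m' b = m b := (hm'val b).2 (fun h => h.elim gb1 fun h' => h'.elim gb2 gb3)
        rw [h1, h2] at hp
        have h3 : 1 ≤ m a := hpos_all a ga
        have h5 : m b ≤ m i₃ := hmax3 b gb1 gb2
        have h6 := hsub4 b gb1 gb2 gb3
        have h7 : m a ≤ m i₁ := hmax1 a
        exact arith_C2 _ _ _ _ _ _ _ _ _ hf hfa hfb hfc hT' hp h3 h7 h5 hc32 hc21 hpr
          (by omega)
      · push_neg at ga
        obtain ⟨ga1, ga2, ga3⟩ := ga
        have h1 : m' a = m a := (hm'val a).2 (fun h => h.elim ga1 fun h' => h'.elim ga2 ga3)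
        have h2 : m' b = m b - 1 := (hm'val b).1 gb
        rw [h1, h2] at hp
        have h3 : 1 ≤ m b := hpos_all b gb
        have h5 : m a ≤ m i₃ := hmax3 a ga1 ga2
        have h6 := hsub4 a ga1 ga2 ga3
        have h7 : m b ≤ m i₁ := hmax1 b
        have hp2 : Ptop r m' = m b - 1 + m a := by omega
        exact arith_C2 _ _ _ _ _ _ _ _ _ hf hfa hfb hfc hT' hp2 h3 h7 h5 hc32 hc21
          (by omega) (by omega)
      · push_neg at ga; push_neg at gb
        obtain ⟨ga1, ga2, ga3⟩ := ga
        obtain ⟨gb1, gb2, gb3⟩ := gb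
        have h1 : m' a = m a := (hm'val a).2 (fun h => h.elim ga1 fun h' => h'.elim ga2 ga3)
        have h2 : m' b = m b := (hm'val b).2 (fun h => h.elim gb1 fun h' => h'.elim gb2 gb3)
        rw [h1, h2] at hp
        have h5 : m a ≤ m i₃ := hmax3 a ga1 ga2
        have h5' : m b ≤ m i₃ := hmax3 b gb1 gb2
        have h6 : m i₁ + m i₂ + m i₃ + m a + m b ≤ Tsum r m := by
          have := hsub {i₁, i₂, i₃, a, b}
          rw [Finset.sum_insert (by simp [h21.symm, h31.symm, Ne.symm ga1, Ne.symm gb1]),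
            Finset.sum_insert (by simp [h32.symm, Ne.symm ga2, Ne.symm gb2]),
            Finset.sum_insert (by simp [Ne.symm ga3, Ne.symm gb3]),
            Finset.sum_pair hab] at this
          omega
        exact arith_C3 _ _ _ _ _ _ _ _ _ hf hfa hfb hfc hT' hp h5 h5' hc32 hc21 hc3pos h6
  have hrhs : minexpr r m' = min (min (Tsum r m' / 3) ((Tsum r m' - Mtop r m') / 2))
      (Tsum r m' - Ptop r m') := rfl
  rw [hrhs]
  exact arith_final _ _ _ _ ineqA ineqB ineqC

lemma build {r : ℕ} (n : ℕ → ℕ) (hr : 3 ≤ r) :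
    ∀ (t : ℕ) (m : Fin r → ℕ), (∀ i, m i ≤ n i) → t ≤ minexpr r m →
    ∃ f : Fin t → Finset ((i : Fin r) × Fin (n i)),
      (∀ k, (Kpartite r n).IsNClique 3 (f k)) ∧
      (∀ k l, k ≠ l → Disjoint (f k) (f l)) ∧
      (∀ k, ∀ x ∈ f k, (x.2 : ℕ) < m x.1) := by
  intro t
  induction t with
  | zero => exact fun m _ _ => ⟨Fin.elim0, fun k => k.elim0, fun k => k.elim0, fun k => k.elim0⟩
  | succ t ih =>
    intro m hm ht
    obtain ⟨i₁, i₂, i₃, h12, h13, h23, hp1, hp2, hp3, hstep⟩ :=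
      step_lemma hr m (le_trans (by omega) ht)
    set m' : Fin r → ℕ := fun i => if i = i₁ ∨ i = i₂ ∨ i = i₃ then m i - 1 else m i with hm'
    have hm'le : ∀ i, m' i ≤ m i := by
      intro i; simp only [hm']; split <;> omega
    obtain ⟨g, hg1, hg2, hg3⟩ := ih m' (fun i => le_trans (hm'le i) (hm i)) (by omega)
    -- the three new vertices
    have hv : ∀ k : Fin r, 1 ≤ m k → m k - 1 < n k := fun k hk => by
      have := hm k; omega
    set v₁ : (i : Fin r) × Fin (n i) := ⟨i₁, ⟨m i₁ - 1, hv i₁ hp1⟩⟩ with hv₁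
    set v₂ : (i : Fin r) × Fin (n i) := ⟨i₂, ⟨m i₂ - 1, hv i₂ hp2⟩⟩ with hv₂
    set v₃ : (i : Fin r) × Fin (n i) := ⟨i₃, ⟨m i₃ - 1, hv i₃ hp3⟩⟩ with hv₃
    have hv12 : v₁ ≠ v₂ := fun hc => h12 (congrArg Sigma.fst hc)
    have hv13 : v₁ ≠ v₃ := fun hc => h13 (congrArg Sigma.fst hc)
    have hv23 : v₂ ≠ v₃ := fun hc => h23 (congrArg Sigma.fst hc)
    set s : Finset ((i : Fin r) × Fin (n i)) := {v₁, v₂, v₃} with hs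
    have hclique : (Kpartite r n).IsNClique 3 s := by
      constructor
      · intro x hx y hy hxy
        simp only [hs, Finset.coe_insert, Set.mem_insert_iff, Finset.coe_singleton,
          Set.mem_singleton_iff] at hx hy
        have : x.1 ≠ y.1 := by
          rcases hx with rfl | rfl | rfl <;> rcases hy with rfl | rfl | rfl <;>
            first
              | (exact absurd rfl hxy)
              | (simp only [hv₁, hv₂, hv₃]; intro hc; simp_all)
        exact this
      · rw [hs, Finset.card_insert_of_notMem (by simp [hv12, hv13]),
          Finset.card_insert_of_notMem (by simp [hv23]), Finset.card_singleton]
    -- support facts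
    have hm'at : ∀ k, (k = i₁ ∨ k = i₂ ∨ k = i₃) → m' k = m k - 1 := by
      intro k hk; simp only [hm', if_pos hk]
    have hsupp_s : ∀ x ∈ s, (x.2 : ℕ) < m x.1 := by
      intro x hx
      simp only [hs, Finset.mem_insert, Finset.mem_singleton] at hx
      rcases hx with rfl | rfl | rfl
      · exact Nat.sub_lt hp1 Nat.one_pos
      · exact Nat.sub_lt hp2 Nat.one_pos
      · exact Nat.sub_lt hp3 Nat.one_pos
    have hdisj_s : ∀ l, Disjoint s (g l) := by
      intro l
      rw [Finset.disjoint_left]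
      intro x hx hxg
      have hlt := hg3 l x hxg
      have e₁ := hm'at i₁ (Or.inl rfl)
      have e₂ := hm'at i₂ (Or.inr (Or.inl rfl))
      have e₃ := hm'at i₃ (Or.inr (Or.inr rfl))
      simp only [hs, Finset.mem_insert, Finset.mem_singleton] at hx
      rcases hx with rfl | rfl | rfl
      · have h' : m i₁ - 1 < m' i₁ := hlt; omega
      · have h' : m i₂ - 1 < m' i₂ := hlt; omega
      · have h' : m i₃ - 1 < m' i₃ := hlt; omega
    refine ⟨Fin.cons s g, ?_, ?_, ?_⟩
    · intro k
      refine Fin.cases ?_ ?_ k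
      · simpa using hclique
      · intro j; simpa using hg1 j
    · intro k l
      refine Fin.cases ?_ ?_ k
      · refine Fin.cases ?_ ?_ l
        · intro h; exact absurd rfl h
        · intro l' _; simpa using hdisj_s l'
      · intro k'
        refine Fin.cases ?_ ?_ l
        · intro _; simpa using (hdisj_s k').symm
        · intro l' h
          have hne : k' ≠ l' := fun hc => h (by rw [hc])
          simpa using hg2 k' l' hne
    · intro k
      refine Fin.cases ?_ ?_ k
      · simpa using hsupp_s
      · intro j
        intro x hx
        simp only [Fin.cons_succ] at hx
        exact lt_of_lt_of_le (hg3 j x hx) (hm'le x.1)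

/-- `K_{n₁,…,n_r}` contains `min{⌊(n₁+⋯+n_r)/3⌋, ⌊(n₂+⋯+n_r)/2⌋, n₃+⋯+n_r}` pairwise
vertex-disjoint triangles. -/
theorem disjoint_triangles_lower_bound (r : ℕ) (n : ℕ → ℕ) (hr : 3 ≤ r)
    (hmono : ∀ i j : ℕ, i ≤ j → j < r → n j ≤ n i)
    (hpos : ∀ i : ℕ, i < r → 1 ≤ n i) :
    HasDisjointTriangles (Kpartite r n)
      (min (min ((∑ i ∈ Finset.range r, n i) / 3) ((∑ i ∈ Finset.Ico 1 r, n i) / 2))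
        (∑ i ∈ Finset.Ico 2 r, n i)) := by
  classical
  set m₀ : Fin r → ℕ := fun i => n i with hm₀
  have i0 : Fin r := ⟨0, by omega⟩
  have i1 : Fin r := ⟨1, by omega⟩
  have hT : Tsum r m₀ = ∑ i ∈ Finset.range r, n i := by
    unfold Tsum
    exact Fin.sum_univ_eq_sum_range n r
  have hM : Mtop r m₀ = n 0 := by
    apply le_antisymm
    · exact Finset.sup_le fun i _ => hmono 0 i (Nat.zero_le _) i.isLt
    · exact Finset.le_sup (f := m₀) (Finset.mem_univ (⟨0, by omega⟩ : Fin r))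
  have hP : Ptop r m₀ = n 0 + n 1 := by
    apply le_antisymm
    · apply Finset.sup_le
      intro p _
      by_cases hp : p.1 = p.2
      · simp [hp]
      · rw [if_neg hp]
        have key : ∀ a b : Fin r, a ≠ b → (a : ℕ) < (b : ℕ) → m₀ a + m₀ b ≤ n 0 + n 1 := by
          intro a b hab hlt
          have h1 : m₀ a ≤ n 0 := hmono 0 a (Nat.zero_le _) a.isLt
          have h2 : m₀ b ≤ n 1 := hmono 1 b (by omega) b.isLt
          omega
        rcases lt_or_gt_of_ne (fun hc : (p.1 : ℕ) = (p.2 : ℕ) => hp (Fin.ext hc)) with h | h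
        · exact key p.1 p.2 hp h
        · have := key p.2 p.1 (Ne.symm hp) h
          omega
    · have hne : (⟨0, by omega⟩ : Fin r) ≠ ⟨1, by omega⟩ := by simp [Fin.ext_iff]
      have := Finset.le_sup
        (f := fun p : Fin r × Fin r => if p.1 = p.2 then 0 else m₀ p.1 + m₀ p.2)
        (Finset.mem_univ ((⟨0, by omega⟩ : Fin r), (⟨1, by omega⟩ : Fin r)))
      simp [hne] at this; exact this
  have hsplit1 : ∑ i ∈ Finset.range r, n i = n 0 + ∑ i ∈ Finset.Ico 1 r, n i := by
    rw [Finset.range_eq_Ico, Finset.sum_eq_sum_Ico_succ_bot (by omega) n]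
  have hsplit2 : ∑ i ∈ Finset.Ico 1 r, n i = n 1 + ∑ i ∈ Finset.Ico 2 r, n i := by
    rw [Finset.sum_eq_sum_Ico_succ_bot (by omega) n]
  have e1 : Tsum r m₀ - Mtop r m₀ = ∑ i ∈ Finset.Ico 1 r, n i := by
    rw [hM, hT]; omega
  have e2 : Tsum r m₀ - Ptop r m₀ = ∑ i ∈ Finset.Ico 2 r, n i := by
    rw [hP, hT]; omega
  have hmineq : minexpr r m₀ =
      min (min ((∑ i ∈ Finset.range r, n i) / 3) ((∑ i ∈ Finset.Ico 1 r, n i) / 2))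
        (∑ i ∈ Finset.Ico 2 r, n i) := by
    unfold minexpr
    rw [e1, e2, hT]
  obtain ⟨f, hf1, hf2, -⟩ := build n hr _ m₀ (fun i => le_refl _) (le_of_eq hmineq.symm)
  exact ⟨f, hf1, hf2⟩
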